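/- arXiv:1701.03280 — 11 statements merged into one kernel-verified Lean document; each statement's English description precedes it below -/
import Mathlib

section
/- Suppose 𝒯_A^S ⊆ 𝒯 is secret towards the agent B = (∼_B, 𝒯_B). Then pre- and post-processing cannot lift the secrecy: for every N ∈ ℕ, all g_A^1, …, g_A^N ∈ 𝒯_A^S, all f_B^1, …, f_B^N ∈ 𝒯_B, every f ∈ 𝒯 and every ρ ∈ Ω, one has f_B^N(g_A^N(⋯ f_B^2(g_A^2(f_B^1(g_A^1(f(ρ))))) ⋯)) ∼_B f_B^N(f_B^{N−1}(⋯ f_B^1(f(ρ)) ⋯)). -/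
/-- Interleaved chain `f_B^n ∘ g_A^n ∘ ⋯ ∘ f_B^1 ∘ g_A^1` (indices `0,…,n-1`). -/
def chainAB {Ω : Type*} (fB gA : ℕ → Ω → Ω) : ℕ → Ω → Ω
  | 0 => id
  | n + 1 => fB n ∘ gA n ∘ chainAB fB gA n

/-- Chain `f_B^n ∘ ⋯ ∘ f_B^1` (indices `0,…,n-1`). -/
def chainB {Ω : Type*} (fB : ℕ → Ω → Ω) : ℕ → Ω → Ω
  | 0 => id
  | n + 1 => fB n ∘ chainB fB n

/-- **Robustness of secrecy.** If `𝒯_A^S` is secret towards the agent `B = (∼_B, 𝒯_B)`,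
then pre- and post-processing cannot lift the secrecy. -/
theorem robustness_of_secrecy {Ω : Type*} (T TB TAS : Set (Ω → Ω))
    (simB : Ω → Ω → Prop) (hequiv : Equivalence simB)
    -- `𝒯` is a submonoid of functions `Ω → Ω`
    (hTid : id ∈ T) (hTcomp : ∀ f ∈ T, ∀ g ∈ T, f ∘ g ∈ T)
    -- `𝒯_B ⊆ 𝒯` is a submonoid
    (hTB : TB ⊆ T) (hTBid : id ∈ TB) (hTBcomp : ∀ f ∈ TB, ∀ g ∈ TB, f ∘ g ∈ TB)
    -- `𝒯_A^S ⊆ 𝒯`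
    (hTAS : TAS ⊆ T)
    -- secrecy of `𝒯_A^S` towards `B`
    (hsecret : ∀ ρ : Ω, ∀ gA ∈ TAS, ∀ fB ∈ TB, simB (fB (gA ρ)) (fB ρ))
    -- arbitrary pre- and post-processing
    (N : ℕ) (gA fB : ℕ → Ω → Ω)
    (hgA : ∀ i, gA i ∈ TAS) (hfB : ∀ i, fB i ∈ TB)
    (f : Ω → Ω) (hf : f ∈ T) (ρ : Ω) :
    simB (chainAB fB gA N (f ρ)) (chainB fB N (f ρ)) := by
  have key : ∀ n, ∀ h ∈ TB, ∀ x : Ω,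
      simB (h (chainAB fB gA n x)) (h (chainB fB n x)) := by
    intro n
    induction n with
    | zero => intro h _ x; exact hequiv.refl _
    | succ n ih =>
      intro h hh x
      have hhf : h ∘ fB n ∈ TB := hTBcomp h hh (fB n) (hfB n)
      have h1 := hsecret (chainAB fB gA n x) (gA n) (hgA n) (h ∘ fB n) hhf
      have h2 := ih (h ∘ fB n) hhf x
      exact hequiv.trans h1 h2
  exact key N id hTBid (f ρ)
end

section
/- Suppose 𝒯_A^S ⊆ 𝒯 is secret towards the agent B = (∼_B, 𝒯_B) and is moreover secret towards B in the presence of f ∈ 𝒯. Then further pre- and post-processing cannot lift the extended secrecy: for every N ∈ ℕ, all g_A^1, …, g_A^N, g'_A^1, …, g'_A^N ∈ 𝒯_A^S, all f_B^1, …, f_B^N, f'_B^1, …, f'_B^N ∈ 𝒯_B, every g ∈ 𝒯 and every ρ ∈ Ω, one has (f_B^N ∘ g_A^N ∘ ⋯ ∘ f_B^1 ∘ g_A^1) ∘ f ∘ (f'_B^N ∘ g'_A^N ∘ ⋯ ∘ f'_B^1 ∘ g'_A^1) ∘ g (ρ) ∼_B (f_B^N ∘ ⋯ ∘ f_B^1)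 ∘ f ∘ (f'_B^N ∘ ⋯ ∘ f'_B^1) ∘ g (ρ). -/
/-- **Robustness of extended secrecy.** If `𝒯_A^S` is secret towards the agent
`B = (∼_B, 𝒯_B)`, and moreover secret towards `B` in the presence of `f ∈ 𝒯`, then
further pre- and post-processing cannot lift the extended secrecy. -/
theorem robustness_of_extended_secrecy {Ω : Type*} (T TB TAS : Set (Ω → Ω))
    (simB : Ω → Ω → Prop) (hequiv : Equivalence simB)
    -- `𝒯` is a submonoid of functions `Ω → Ω`
    (hTid : id ∈ T) (hTcomp : ∀ f ∈ T, ∀ g ∈ T, f ∘ g ∈ T)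
    -- `𝒯_B ⊆ 𝒯` is a submonoid
    (hTB : TB ⊆ T) (hTBid : id ∈ TB) (hTBcomp : ∀ f ∈ TB, ∀ g ∈ TB, f ∘ g ∈ TB)
    -- `𝒯_A^S ⊆ 𝒯`
    (hTAS : TAS ⊆ T)
    (f : Ω → Ω) (hf : f ∈ T)
    -- secrecy of `𝒯_A^S` towards `B`
    (hsecret : ∀ ρ : Ω, ∀ gA ∈ TAS, ∀ fB ∈ TB, simB (fB (gA ρ)) (fB ρ))
    -- extended secrecy of `𝒯_A^S` towards `B` in the presence of `f`
    (hext : ∀ ρ : Ω, ∀ gA ∈ TAS, ∀ fB ∈ TB, ∀ fB' ∈ TB,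
      simB (fB (f (fB' (gA ρ)))) (fB (f (fB' ρ))))
    -- arbitrary pre- and post-processing
    (N : ℕ) (gA gA' fB fB' : ℕ → Ω → Ω)
    (hgA : ∀ i, gA i ∈ TAS) (hgA' : ∀ i, gA' i ∈ TAS)
    (hfB : ∀ i, fB i ∈ TB) (hfB' : ∀ i, fB' i ∈ TB)
    (g : Ω → Ω) (hg : g ∈ T) (ρ : Ω) :
    simB (chainAB fB gA N (f (chainAB fB' gA' N (g ρ))))
         (chainB fB N (f (chainB fB' N (g ρ)))) := by
  -- chainB is in TB
  have hchainB : ∀ (h : ℕ → Ω → Ω), (∀ i, h i ∈ TB) → ∀ n, chainB h n ∈ TB := by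
    intro h hh n
    induction n with
    | zero => exact hTBid
    | succ n ih => exact hTBcomp _ (hh n) _ ih
  -- post-processing: chainAB ∼ chainB after any fB'' ∈ TB
  have key1 : ∀ n, ∀ fc ∈ TB, ∀ σ : Ω,
      simB (fc (chainAB fB gA n σ)) (fc (chainB fB n σ)) := by
    intro n
    induction n with
    | zero => intro fc hfc σ; exact hequiv.refl _
    | succ n ih =>
      intro fc hfc σ
      have h1 : simB (fc (fB n (gA n (chainAB fB gA n σ))))
          (fc (fB n (chainAB fB gA n σ))) :=
        hsecret _ _ (hgA n) _ (hTBcomp _ hfc _ (hfB n))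
      have h2 := ih (fc ∘ fB n) (hTBcomp _ hfc _ (hfB n)) σ
      exact hequiv.trans h1 h2
  -- pre-processing
  have key2 : ∀ n, ∀ fc ∈ TB, ∀ h ∈ TB, ∀ σ : Ω,
      simB (fc (f (h (chainAB fB' gA' n σ)))) (fc (f (h (chainB fB' n σ)))) := by
    intro n
    induction n with
    | zero => intro fc hfc h hh σ; exact hequiv.refl _
    | succ n ih =>
      intro fc hfc h hh σ
      have h1 : simB (fc (f (h (fB' n (gA' n (chainAB fB' gA' n σ))))))
          (fc (f (h (fB' n (chainAB fB' gA' n σ))))) :=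
        hext _ _ (hgA' n) _ hfc _ (hTBcomp _ hh _ (hfB' n))
      have h2 := ih fc hfc (h ∘ fB' n) (hTBcomp _ hh _ (hfB' n)) σ
      exact hequiv.trans h1 h2
  have step1 := key1 N id hTBid (f (chainAB fB' gA' N (g ρ)))
  have step2 := key2 N (chainB fB N) (hchainB fB hfB N) id hTBid (g ρ)
  exact hequiv.trans step1 step2
end

section
/- Let B = (∼_B, 𝒯_B) be an agent, 𝒯_A ⊆ 𝒯 a submonoid, and f ∈ 𝒯. Then the set 𝒯_A^S of all elements of 𝒯_A that are both secret towards B and secret towards B in the presence of f forms a monoid: it contains the identity transformation, and if f_A, g_A ∈ 𝒯_A^S then f_A ∘ g_A ∈ 𝒯_A^S. -/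
/-- A single transformation `g` is secret towards the agent `B = (∼_B, 𝒯_B)`. -/
def SecretTowards {Ω : Type*} (simB : Ω → Ω → Prop) (TB : Set (Ω → Ω))
    (g : Ω → Ω) : Prop :=
  ∀ ρ : Ω, ∀ fB ∈ TB, simB (fB (g ρ)) (fB ρ)

/-- A single transformation `g` is secret towards `B = (∼_B, 𝒯_B)` in the presence
of a global transformation `f`. -/
def SecretTowardsInPresence {Ω : Type*} (simB : Ω → Ω → Prop) (TB : Set (Ω → Ω))
    (f g : Ω → Ω) : Prop :=
  ∀ ρ : Ω, ∀ fB ∈ TB, ∀ fB' ∈ TB, simB (fB (f (fB' (g ρ)))) (fB (f (fB' ρ)))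

/-- The set `𝒯_A^S` of elements of `𝒯_A` that are secret towards `B` and secret
towards `B` in the presence of `f`. -/
def secretSet {Ω : Type*} (simB : Ω → Ω → Prop) (TA TB : Set (Ω → Ω))
    (f : Ω → Ω) : Set (Ω → Ω) :=
  {g ∈ TA | SecretTowards simB TB g ∧ SecretTowardsInPresence simB TB f g}

/-- **Secret monoid.** The set `𝒯_A^S` of elements of a submonoid `𝒯_A ⊆ 𝒯` that are
secret towards `B` and secret towards `B` in the presence of `f ∈ 𝒯` forms a monoid:
it contains `id` and is closed under composition. -/
theorem secret_monoid {Ω : Type*} (T TA TB : Set (Ω → Ω))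
    (simB : Ω → Ω → Prop) (hequiv : Equivalence simB)
    -- `𝒯` is a submonoid of functions `Ω → Ω`
    (hTid : id ∈ T) (hTcomp : ∀ f ∈ T, ∀ g ∈ T, f ∘ g ∈ T)
    -- `𝒯_A ⊆ 𝒯` is a submonoid
    (hTA : TA ⊆ T) (hTAid : id ∈ TA) (hTAcomp : ∀ f ∈ TA, ∀ g ∈ TA, f ∘ g ∈ TA)
    -- `𝒯_B ⊆ 𝒯` is a submonoid
    (hTB : TB ⊆ T) (hTBid : id ∈ TB) (hTBcomp : ∀ f ∈ TB, ∀ g ∈ TB, f ∘ g ∈ TB)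
    (f : Ω → Ω) (hf : f ∈ T) :
    id ∈ secretSet simB TA TB f ∧
      ∀ fA ∈ secretSet simB TA TB f, ∀ gA ∈ secretSet simB TA TB f,
        fA ∘ gA ∈ secretSet simB TA TB f := by
  constructor
  · exact ⟨hTAid, fun ρ fB hfB => hequiv.refl _, fun ρ fB hfB fB' hfB' => hequiv.refl _⟩
  · rintro fA ⟨hfA, hfAs, hfAp⟩ gA ⟨hgA, hgAs, hgAp⟩
    refine ⟨hTAcomp fA hfA gA hgA, ?_, ?_⟩
    · intro ρ fB hfB
      exact hequiv.trans (hfAs (gA ρ) fB hfB) (hgAs ρ fB hfB)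
    · intro ρ fB hfB fB' hfB'
      exact hequiv.trans (hfAp (gA ρ) fB hfB fB' hfB') (hgAp ρ fB hfB fB' hfB')
end

section
/- Let 𝒯_A, 𝒯_B ⊆ 𝒯 be submonoids that commute (f_B(g_A(ρ)) = g_A(f_B(ρ)) for all ρ ∈ Ω, g_A ∈ 𝒯_A, f_B ∈ 𝒯_B), and let ∼_B be an equivalence relation on Ω. If g_A(ρ) ∼_B ρ for all ρ ∈ Ω and g_A ∈ 𝒯_A, then 𝒯_A is secret towards the agent B = (∼_B, 𝒯_B), i.e., f_B(g_A(ρ)) ∼_B f_B(ρ) for all ρ ∈ Ω, g_A ∈ 𝒯_A, f_B ∈ 𝒯_B. -/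
/-- **Secrecy for commuting agents.** If `𝒯_A` and `𝒯_B` commute and
`g_A(ρ) ∼_B ρ` for all `ρ ∈ Ω` and `g_A ∈ 𝒯_A`, then `𝒯_A` is secret towards the agent
`B = (∼_B, 𝒯_B)`. -/
theorem secrecy_commuting {Ω : Type*} (T TA TB : Set (Ω → Ω))
    (simB : Ω → Ω → Prop) (hequiv : Equivalence simB)
    -- `𝒯` is a submonoid of functions `Ω → Ω`
    (hTid : id ∈ T) (hTcomp : ∀ f ∈ T, ∀ g ∈ T, f ∘ g ∈ T)
    -- `𝒯_A, 𝒯_B ⊆ 𝒯` are submonoids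
    (hTA : TA ⊆ T) (hTAid : id ∈ TA) (hTAcomp : ∀ f ∈ TA, ∀ g ∈ TA, f ∘ g ∈ TA)
    (hTB : TB ⊆ T) (hTBid : id ∈ TB) (hTBcomp : ∀ f ∈ TB, ∀ g ∈ TB, f ∘ g ∈ TB)
    -- `𝒯_A` and `𝒯_B` commute
    (hcomm : ∀ ρ : Ω, ∀ gA ∈ TA, ∀ fB ∈ TB, fB (gA ρ) = gA (fB ρ))
    -- independence condition
    (hcond : ∀ ρ : Ω, ∀ gA ∈ TA, simB (gA ρ) ρ) :
    -- conclusion: secrecy of `𝒯_A` towards `B`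
    ∀ ρ : Ω, ∀ gA ∈ TA, ∀ fB ∈ TB, simB (fB (gA ρ)) (fB ρ) := by
  intro ρ gA hgA fB hfB
  rw [hcomm ρ gA hgA fB hfB]
  exact hcond (fB ρ) gA hgA
end

section
/- Let 𝒯_A, 𝒯_B ⊆ 𝒯 be commuting submonoids (f_B ∘ g_A = g_A ∘ f_B pointwise for all g_A ∈ 𝒯_A, f_B ∈ 𝒯_B). Then the agents A = (∼_{∖B}, 𝒯_A) and B = (∼_{∖A}, 𝒯_B) are mutually secret: f_B(g_A(ρ)) ∼_{∖A} f_B(ρ) and g_A(f_B(ρ)) ∼_{∖B} g_A(ρ) for all ρ ∈ Ω, g_A ∈ 𝒯_A and f_B ∈ 𝒯_B. -/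
/-- Convergence through `𝒯_A`: `ρ ∼'_{∖A} σ` iff `∃ f_A, g_A ∈ 𝒯_A` with
`f_A(ρ) = g_A(σ)`. -/
def convergesThrough {Ω : Type*} (TA : Set (Ω → Ω)) (ρ σ : Ω) : Prop :=
  ∃ fA ∈ TA, ∃ gA ∈ TA, fA ρ = gA σ

/-- The induced perspective `∼_{∖A}`: the transitive closure of `∼'_{∖A}`. -/
def inducedPerspective {Ω : Type*} (TA : Set (Ω → Ω)) : Ω → Ω → Prop :=
  Relation.TransGen (convergesThrough TA)

/-- **Deriving secret agents.** Commuting submonoids `𝒯_A, 𝒯_B ⊆ 𝒯` give rise to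
mutually secret agents `A = (∼_{∖B}, 𝒯_A)` and `B = (∼_{∖A}, 𝒯_B)`. -/
theorem deriving_secret_agents {Ω : Type*} (T TA TB : Set (Ω → Ω))
    -- `𝒯` is a submonoid of functions `Ω → Ω`
    (hTid : id ∈ T) (hTcomp : ∀ f ∈ T, ∀ g ∈ T, f ∘ g ∈ T)
    -- `𝒯_A, 𝒯_B ⊆ 𝒯` are submonoids
    (hTA : TA ⊆ T) (hTAid : id ∈ TA) (hTAcomp : ∀ f ∈ TA, ∀ g ∈ TA, f ∘ g ∈ TA)
    (hTB : TB ⊆ T) (hTBid : id ∈ TB) (hTBcomp : ∀ f ∈ TB, ∀ g ∈ TB, f ∘ g ∈ TB)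
    -- `𝒯_A` and `𝒯_B` commute
    (hcomm : ∀ ρ : Ω, ∀ gA ∈ TA, ∀ fB ∈ TB, fB (gA ρ) = gA (fB ρ)) :
    -- mutual secrecy: `𝒯_A` is secret towards `B = (∼_{∖A}, 𝒯_B)` and vice versa
    ∀ ρ : Ω, ∀ gA ∈ TA, ∀ fB ∈ TB,
      inducedPerspective TA (fB (gA ρ)) (fB ρ) ∧
      inducedPerspective TB (gA (fB ρ)) (gA ρ) := by
  intro ρ gA hgA fB hfB
  constructor
  · exact Relation.TransGen.single ⟨id, hTAid, gA, hgA, hcomm ρ gA hgA fB hfB⟩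
  · exact Relation.TransGen.single ⟨id, hTBid, fB, hfB, (hcomm ρ gA hgA fB hfB).symm⟩
end

section
/- Let 𝒯_A, 𝒯_B ⊆ 𝒯 be submonoids that commute, and let B = (∼_B, 𝒯_B) be an agent such that 𝒯_A is secret towards B. Then the induced perspective is minimal: for all ρ, σ ∈ Ω, ρ ∼_{∖A} σ implies ρ ∼_B σ (equivalently, [ρ]_{∖A} ⊆ [ρ]_B for every ρ ∈ Ω). -/
/-- **Induced perspective is minimal.** If `𝒯_A` and `𝒯_B` commute and `𝒯_A` is secret
towards the agent `B = (∼_B, 𝒯_B)`, then `ρ ∼_{∖A} σ` implies `ρ ∼_B σ`, i.e.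
`[ρ]_{∖A} ⊆ [ρ]_B` for all `ρ`. -/
theorem induced_perspective_minimal {Ω : Type*} (T TA TB : Set (Ω → Ω))
    (simB : Ω → Ω → Prop) (hequiv : Equivalence simB)
    -- `𝒯` is a submonoid of functions `Ω → Ω`
    (hTid : id ∈ T) (hTcomp : ∀ f ∈ T, ∀ g ∈ T, f ∘ g ∈ T)
    -- `𝒯_A, 𝒯_B ⊆ 𝒯` are submonoids
    (hTA : TA ⊆ T) (hTAid : id ∈ TA) (hTAcomp : ∀ f ∈ TA, ∀ g ∈ TA, f ∘ g ∈ TA)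
    (hTB : TB ⊆ T) (hTBid : id ∈ TB) (hTBcomp : ∀ f ∈ TB, ∀ g ∈ TB, f ∘ g ∈ TB)
    -- `𝒯_A` and `𝒯_B` commute
    (hcomm : ∀ ρ : Ω, ∀ gA ∈ TA, ∀ fB ∈ TB, fB (gA ρ) = gA (fB ρ))
    -- `𝒯_A` is secret towards `B`
    (hsecret : ∀ ρ : Ω, ∀ gA ∈ TA, ∀ fB ∈ TB, simB (fB (gA ρ)) (fB ρ)) :
    ∀ ρ σ : Ω, inducedPerspective TA ρ σ → simB ρ σ := by
  have hstep : ∀ ρ σ : Ω, convergesThrough TA ρ σ → simB ρ σ := by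
    rintro ρ σ ⟨fA, hfA, gA, hgA, heq⟩
    have h1 : simB (fA ρ) ρ := hsecret ρ fA hfA id hTBid
    have h2 : simB (gA σ) σ := hsecret σ gA hgA id hTBid
    exact hequiv.trans (hequiv.symm h1) (heq ▸ h2)
  intro ρ σ h
  induction h with
  | single h => exact hstep _ _ h
  | tail _ h ih => exact hequiv.trans ih (hstep _ _ h)
end

section
/- Let 𝒯_A, 𝒯_B ⊆ 𝒯 be submonoids that commute (f_B ∘ g_A = g_A ∘ f_B pointwise for all g_A ∈ 𝒯_A, f_B ∈ 𝒯_B). Then the induced perspective ∼_{∖A} is preserved by 𝒯_B: for all ω, ρ ∈ Ω and every f_B ∈ 𝒯_B, ω ∼_{∖A} ρ implies f_B(ω) ∼_{∖A} f_B(ρ). -/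
/-- **Induced perspective is operational.** If `𝒯_A` and `𝒯_B` commute, then the induced
perspective `∼_{∖A}` is preserved by every `f_B ∈ 𝒯_B`: `ω ∼_{∖A} ρ` implies
`f_B(ω) ∼_{∖A} f_B(ρ)`. -/
theorem induced_perspective_operational {Ω : Type*} (T TA TB : Set (Ω → Ω))
    -- `𝒯` is a submonoid of functions `Ω → Ω`
    (hTid : id ∈ T) (hTcomp : ∀ f ∈ T, ∀ g ∈ T, f ∘ g ∈ T)
    -- `𝒯_A, 𝒯_B ⊆ 𝒯` are submonoids
    (hTA : TA ⊆ T) (hTAid : id ∈ TA) (hTAcomp : ∀ f ∈ TA, ∀ g ∈ TA, f ∘ g ∈ TA)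
    (hTB : TB ⊆ T) (hTBid : id ∈ TB) (hTBcomp : ∀ f ∈ TB, ∀ g ∈ TB, f ∘ g ∈ TB)
    -- `𝒯_A` and `𝒯_B` commute
    (hcomm : ∀ ρ : Ω, ∀ gA ∈ TA, ∀ fB ∈ TB, fB (gA ρ) = gA (fB ρ)) :
    ∀ ω ρ : Ω, ∀ fB ∈ TB,
      inducedPerspective TA ω ρ → inducedPerspective TA (fB ω) (fB ρ) := by
  intro ω ρ fB hfB h
  induction h with
  | single hstep =>
    obtain ⟨fA, hfA, gA, hgA, heq⟩ := hstep
    exact Relation.TransGen.single ⟨fA, hfA, gA, hgA, by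
      rw [← hcomm ω fA hfA fB hfB, ← hcomm _ gA hgA fB hfB, heq]⟩
  | tail _ hstep ih =>
    obtain ⟨fA, hfA, gA, hgA, heq⟩ := hstep
    exact ih.tail ⟨fA, hfA, gA, hgA, by
      rw [← hcomm _ fA hfA fB hfB, ← hcomm _ gA hgA fB hfB, heq]⟩
end

section
/- Let 𝒯_A^S, 𝒯_B ⊆ 𝒯 be submonoids and f ∈ 𝒯, and let ∼_B be the relation constructed from 𝒯_A^S, 𝒯_B and f as in the context. Then ∼_B is an equivalence relation on Ω, and 𝒯_A^S is both secret towards the agent (∼_B, 𝒯_B) and secret towards (∼_B, 𝒯_B) in the presence of f: f_B(g_A(ρ)) ∼_B f_B(ρ) and f_B(f(f'_B(g_A(ρ)))) ∼_B f_B(f(f'_B(ρ))) for all ρ ∈ Ω, g_A ∈ 𝒯_A^S, f_B, f'_B ∈ 𝒯_B. -/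
/-- The relation `∼`: `ρ ∼ σ` iff `∃ f_A, g_A ∈ 𝒯_A^S` with `f_A(ρ) = g_A(σ)`. -/
def simBase {Ω : Type*} (TAS : Set (Ω → Ω)) (ρ σ : Ω) : Prop :=
  ∃ fA ∈ TAS, ∃ gA ∈ TAS, fA ρ = gA σ

/-- The relation `∼'` built from `∼`, `𝒯_B` and a global transformation `f`. -/
def simStep {Ω : Type*} (TAS TB : Set (Ω → Ω)) (f : Ω → Ω) (ρ σ : Ω) : Prop :=
  simBase TAS ρ σ ∨
  (∃ ρ' σ' : Ω, ∃ fB ∈ TB, ρ = fB ρ' ∧ σ = fB σ' ∧ simBase TAS ρ' σ') ∨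
  (∃ ρ' σ' : Ω, ∃ fB ∈ TB, ∃ fB' ∈ TB,
    ρ = fB (f (fB' ρ')) ∧ σ = fB (f (fB' σ')) ∧ simBase TAS ρ' σ')

/-- The constructed relation `∼_B`: the transitive closure of `∼'`. -/
def simConstructed {Ω : Type*} (TAS TB : Set (Ω → Ω)) (f : Ω → Ω) : Ω → Ω → Prop :=
  Relation.TransGen (simStep TAS TB f)

/-- **Deriving secret agents without commutation.** The constructed relation `∼_B` is an
equivalence relation on `Ω`, towards which `𝒯_A^S` is secret and also secret in the
presence of `f`. -/
theorem constructed_relation_secret {Ω : Type*} (T TAS TB : Set (Ω → Ω))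
    -- `𝒯` is a submonoid of functions `Ω → Ω`
    (hTid : id ∈ T) (hTcomp : ∀ f ∈ T, ∀ g ∈ T, f ∘ g ∈ T)
    -- `𝒯_A^S, 𝒯_B ⊆ 𝒯` are submonoids
    (hTAS : TAS ⊆ T) (hTASid : id ∈ TAS)
    (hTAScomp : ∀ f ∈ TAS, ∀ g ∈ TAS, f ∘ g ∈ TAS)
    (hTB : TB ⊆ T) (hTBid : id ∈ TB) (hTBcomp : ∀ f ∈ TB, ∀ g ∈ TB, f ∘ g ∈ TB)
    (f : Ω → Ω) (hf : f ∈ T) :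
    Equivalence (simConstructed TAS TB f) ∧
    -- `𝒯_A^S` is secret towards `(∼_B, 𝒯_B)`
    (∀ ρ : Ω, ∀ gA ∈ TAS, ∀ fB ∈ TB,
      simConstructed TAS TB f (fB (gA ρ)) (fB ρ)) ∧
    -- `𝒯_A^S` is secret towards `(∼_B, 𝒯_B)` in the presence of `f`
    (∀ ρ : Ω, ∀ gA ∈ TAS, ∀ fB ∈ TB, ∀ fB' ∈ TB,
      simConstructed TAS TB f (fB (f (fB' (gA ρ)))) (fB (f (fB' ρ)))) := by

  have hbr : ∀ ρ : Ω, simBase TAS ρ ρ := fun ρ => ⟨id, hTASid, id, hTASid, rfl⟩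
  have hbs : ∀ ρ σ : Ω, simBase TAS ρ σ → simBase TAS σ ρ := by
    rintro ρ σ ⟨fA, hfA, gA, hgA, h⟩; exact ⟨gA, hgA, fA, hfA, h.symm⟩
  have hss : ∀ ρ σ : Ω, simStep TAS TB f ρ σ → simStep TAS TB f σ ρ := by
    rintro ρ σ (h | ⟨ρ', σ', fB, hfB, h1, h2, h3⟩ | ⟨ρ', σ', fB, hfB, fB', hfB', h1, h2, h3⟩)
    · exact Or.inl (hbs _ _ h)
    · exact Or.inr (Or.inl ⟨σ', ρ', fB, hfB, h2, h1, hbs _ _ h3⟩)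
    · exact Or.inr (Or.inr ⟨σ', ρ', fB, hfB, fB', hfB', h2, h1, hbs _ _ h3⟩)
  refine ⟨⟨fun ρ => Relation.TransGen.single (Or.inl (hbr ρ)),
      fun h => ?_, fun h1 h2 => h1.trans h2⟩, ?_, ?_⟩
  · induction h with
    | single h => exact Relation.TransGen.single (hss _ _ h)
    | tail _ h ih => exact Relation.TransGen.head (hss _ _ h) ih
  · intro ρ gA hgA fB hfB
    exact Relation.TransGen.single (Or.inr (Or.inl
      ⟨gA ρ, ρ, fB, hfB, rfl, rfl, id, hTASid, gA, hgA, rfl⟩))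
  · intro ρ gA hgA fB hfB fB' hfB'
    exact Relation.TransGen.single (Or.inr (Or.inr
      ⟨gA ρ, ρ, fB, hfB, fB', hfB', rfl, rfl, id, hTASid, gA, hgA, rfl⟩))
end

section
/- Let 𝒯_A^S, 𝒯_B ⊆ 𝒯 be submonoids and f ∈ 𝒯, and let ∼_B be the relation constructed from 𝒯_A^S, 𝒯_B and f as in the context. Then ∼_B is the smallest such equivalence relation: for any equivalence relation ≈ on Ω such that 𝒯_A^S is secret towards the agent (≈, 𝒯_B) and secret towards (≈, 𝒯_B) in the presence of f, one has ρ ∼_B σ implies ρ ≈ σ for all ρ, σ ∈ Ω. -/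
/-- **Minimality of the constructed relation.** The constructed relation `∼_B` is the
smallest equivalence relation on `Ω` towards which `𝒯_A^S` is secret and secret in the
presence of `f`: any such equivalence relation `≈` contains `∼_B`. -/
theorem constructed_relation_smallest {Ω : Type*} (T TAS TB : Set (Ω → Ω))
    -- `𝒯` is a submonoid of functions `Ω → Ω`
    (hTid : id ∈ T) (hTcomp : ∀ f ∈ T, ∀ g ∈ T, f ∘ g ∈ T)
    -- `𝒯_A^S, 𝒯_B ⊆ 𝒯` are submonoids
    (hTAS : TAS ⊆ T) (hTASid : id ∈ TAS)
    (hTAScomp : ∀ f ∈ TAS, ∀ g ∈ TAS, f ∘ g ∈ TAS)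
    (hTB : TB ⊆ T) (hTBid : id ∈ TB) (hTBcomp : ∀ f ∈ TB, ∀ g ∈ TB, f ∘ g ∈ TB)
    (f : Ω → Ω) (hf : f ∈ T)
    -- any equivalence relation `≈` with the secrecy properties
    (approx : Ω → Ω → Prop) (happrox : Equivalence approx)
    (hsecret : ∀ ρ : Ω, ∀ gA ∈ TAS, ∀ fB ∈ TB, approx (fB (gA ρ)) (fB ρ))
    (hext : ∀ ρ : Ω, ∀ gA ∈ TAS, ∀ fB ∈ TB, ∀ fB' ∈ TB,
      approx (fB (f (fB' (gA ρ)))) (fB (f (fB' ρ)))) :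
    ∀ ρ σ : Ω, simConstructed TAS TB f ρ σ → approx ρ σ := by

  have step : ∀ ρ σ : Ω, simStep TAS TB f ρ σ → approx ρ σ := by
    intro ρ σ h
    rcases h with ⟨fA, hfA, gA, hgA, heq⟩ |
      ⟨ρ', σ', fB, hfB, hρ, hσ, fA, hfA, gA, hgA, heq⟩ |
      ⟨ρ', σ', fB, hfB, fB', hfB', hρ, hσ, fA, hfA, gA, hgA, heq⟩
    · have h1 := hsecret ρ fA hfA id hTBid
      have h2 := hsecret σ gA hgA id hTBid
      simp only [id] at h1 h2
      rw [heq] at h1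
      exact happrox.trans (happrox.symm h1) h2
    · have h1 := hsecret ρ' fA hfA fB hfB
      have h2 := hsecret σ' gA hgA fB hfB
      rw [heq] at h1
      rw [hρ, hσ]
      exact happrox.trans (happrox.symm h1) h2
    · have h1 := hext ρ' fA hfA fB hfB fB' hfB'
      have h2 := hext σ' gA hgA fB hfB fB' hfB'
      rw [heq] at h1
      rw [hρ, hσ]
      exact happrox.trans (happrox.symm h1) h2
  intro ρ σ h
  induction h with
  | single h => exact step _ _ h
  | tail _ h ih => exact happrox.trans ih (step _ _ h)
end

section
/- Let 𝒯_A^S, 𝒯_B ⊆ 𝒯 be commuting submonoids (f_B ∘ g_A = g_A ∘ f_B pointwise for all g_A ∈ 𝒯_A^S, f_B ∈ 𝒯_B), and take f = id in the construction of ∼_B from the context. Then ∼_B coincides with the induced perspective of 𝒯_A^S: for all ρ, σ ∈ Ω, ρ ∼_B σ if and only if ρ and σ are related by the transitive closure of the relation ρ ∼ σ ⟺ ∃ f_A, g_A ∈ 𝒯_A^S with f_A(ρ) = g_A(σ). -/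
/-- **Recovering the induced perspective.** For commuting submonoids `𝒯_A^S` and `𝒯_B`
and `f = id`, the constructed relation `∼_B` coincides with the induced perspective of
`𝒯_A^S`, i.e. the transitive closure of `∼`. -/
theorem constructed_relation_commuting_id {Ω : Type*} (T TAS TB : Set (Ω → Ω))
    -- `𝒯` is a submonoid of functions `Ω → Ω`
    (hTid : id ∈ T) (hTcomp : ∀ f ∈ T, ∀ g ∈ T, f ∘ g ∈ T)
    -- `𝒯_A^S, 𝒯_B ⊆ 𝒯` are submonoids
    (hTAS : TAS ⊆ T) (hTASid : id ∈ TAS)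
    (hTAScomp : ∀ f ∈ TAS, ∀ g ∈ TAS, f ∘ g ∈ TAS)
    (hTB : TB ⊆ T) (hTBid : id ∈ TB) (hTBcomp : ∀ f ∈ TB, ∀ g ∈ TB, f ∘ g ∈ TB)
    -- `𝒯_A^S` and `𝒯_B` commute
    (hcomm : ∀ ρ : Ω, ∀ gA ∈ TAS, ∀ fB ∈ TB, fB (gA ρ) = gA (fB ρ)) :
    ∀ ρ σ : Ω,
      simConstructed TAS TB (id : Ω → Ω) ρ σ ↔
        Relation.TransGen (simBase TAS) ρ σ := by
  have key : ∀ ρ σ : Ω, simStep TAS TB (id : Ω → Ω) ρ σ → simBase TAS ρ σ := by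
    intro ρ σ h
    have push : ∀ ρ' σ' : Ω, ∀ fB ∈ TB, simBase TAS ρ' σ' →
        simBase TAS (fB ρ') (fB σ') := by
      rintro ρ' σ' fB hfB ⟨fA, hfA, gA, hgA, heq⟩
      exact ⟨fA, hfA, gA, hgA, by
        rw [← hcomm ρ' fA hfA fB hfB, ← hcomm σ' gA hgA fB hfB, heq]⟩
    rcases h with h | ⟨ρ', σ', fB, hfB, rfl, rfl, h⟩ |
        ⟨ρ', σ', fB, hfB, fB', hfB', rfl, rfl, h⟩
    · exact h
    · exact push ρ' σ' fB hfB h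
    · exact push _ _ fB hfB (push ρ' σ' fB' hfB' h)
  intro ρ σ
  constructor
  · exact fun h => Relation.TransGen.mono key ρ σ h
  · exact fun h => Relation.TransGen.mono (p := simStep TAS TB id) (fun a b hb => Or.inl hb) ρ σ h
end

section
/- Let P be a box on two bits, i.e., P : Bool × Bool → Bool × Bool → ℝ, written P(x,y|a,b), with P(x,y|a,b) ≥ 0 and ∑_{x,y} P(x,y|a,b) = 1 for each (a,b). Then P is non-signalling from Alice to Bob in the traditional sense (∑_x P(x,y|0,b) = ∑_x P(x,y|1,b) for all y, b ∈ Bool) if and only if the following extended-secrecy condition holds: for every probability distribution Q on Bool × Bool (Q ≥ 0 and ∑_{a,b} Q(a,b) = 1), every local stochastic map G : Bool → Bool → ℝ acting on Alice's input (G(a'|a) ≥ 0 and ∑_{a'} G(a'|a) = 1 for each a), every local stochastic map H : Bool → Bool → ℝ acting on Bob's output (H(y'|y) ≥ 0 and ∑_{y'} H(y'|y) = 1 for each y), and every y' ∈ Bool, one has ∑_{a,a',b,x,y} H(y'|y) · P(x,y|a',b) · G(a'|a) · Q(a,b) = ∑_{a,b,x,y} H(y'|y) · P(x,y|a,b) ·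 Q(a,b). -/
/-- **Equivalence to non-signalling in GPTs.** For a box `P(x,y|a,b)` on two bits, the
traditional non-signalling condition from Alice to Bob is equivalent to the
extended-secrecy condition: for every input distribution `Q`, every local stochastic
map `G` on Alice's input, every local stochastic map `H` on Bob's output, and every
`y'`, the output distribution of Bob does not depend on whether `G` was applied. -/
theorem gpt_nonsignalling_equivalence
    (P : Bool × Bool → Bool × Bool → ℝ)
    (hPnn : ∀ x y a b : Bool, 0 ≤ P (x, y) (a, b))
    (hPnorm : ∀ a b : Bool, ∑ x : Bool, ∑ y : Bool, P (x, y) (a, b) = 1) :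
    -- traditional non-signalling from Alice to Bob
    (∀ y b : Bool,
        ∑ x : Bool, P (x, y) (false, b) = ∑ x : Bool, P (x, y) (true, b)) ↔
    -- extended secrecy
    (∀ Q : Bool × Bool → ℝ,
      (∀ a b : Bool, 0 ≤ Q (a, b)) →
      (∑ a : Bool, ∑ b : Bool, Q (a, b)) = 1 →
      ∀ G : Bool → Bool → ℝ,
        (∀ a' a : Bool, 0 ≤ G a' a) →
        (∀ a : Bool, ∑ a' : Bool, G a' a = 1) →
      ∀ H : Bool → Bool → ℝ,
        (∀ y' y : Bool, 0 ≤ H y' y) →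
        (∀ y : Bool, ∑ y' : Bool, H y' y = 1) →
      ∀ y' : Bool,
        (∑ a : Bool, ∑ a' : Bool, ∑ b : Bool, ∑ x : Bool, ∑ y : Bool,
            H y' y * P (x, y) (a', b) * G a' a * Q (a, b)) =
          ∑ a : Bool, ∑ b : Bool, ∑ x : Bool, ∑ y : Bool,
            H y' y * P (x, y) (a, b) * Q (a, b)) := by
  constructor
  · intro ns Q hQnn hQnorm G hGnn hGnorm H hHnn hHnorm y'
    have ns' : ∀ y b : Bool,
        P (false, y) (false, b) + P (true, y) (false, b) =
        P (false, y) (true, b) + P (true, y) (true, b) := by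
      intro y b
      have := ns y b
      simpa [Fintype.sum_bool, add_comm] using this
    have hG' : ∀ a : Bool, G false a + G true a = 1 := by
      intro a
      have := hGnorm a
      simpa [Fintype.sum_bool, add_comm] using this
    simp only [Fintype.sum_bool]
    linear_combination
      (H y' false * (Q (true, false) * G false true - Q (false, false) * G true false)) *
        (ns' false false) +
      (H y' false * (Q (true, true) * G false true - Q (false, true) * G true false)) *
        (ns' false true) +
      (H y' true * (Q (true, false) * G false true - Q (false, false) * G true false)) *
        (ns' true false) +
      (H y' true * (Q (true, true) * G false true - Q (false, true) * G true false)) *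
        (ns' true true) +
      (hG' false) * (H y' false * Q (false, false) * (P (false, false) (false, false) + P (true, false) (false, false))
        + H y' false * Q (false, true) * (P (false, false) (false, true) + P (true, false) (false, true))
        + H y' true * Q (false, false) * (P (false, true) (false, false) + P (true, true) (false, false))
        + H y' true * Q (false, true) * (P (false, true) (false, true) + P (true, true) (false, true))) +
      (hG' true) * (H y' false * Q (true, false) * (P (false, false) (true, false) + P (true, false) (true, false))
        + H y' false * Q (true, true) * (P (false, false) (true, true) + P (true, false) (true, true))
        + H y' true * Q (true, false) * (P (false, true) (true, false) + P (true, true) (true, false))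
        + H y' true * Q (true, true) * (P (false, true) (true, true) + P (true, true) (true, true)))
  · intro h y b
    have := h (fun p => if p = (false, b) then 1 else 0)
      (by intro a b'; split <;> norm_num)
      (by cases b <;> simp [Fintype.sum_bool] <;> decide)
      (fun a' _ => if a' = true then 1 else 0)
      (by intro a' a; split <;> norm_num)
      (by intro a; simp [Fintype.sum_bool])
      (fun y1 y2 => if y1 = y2 then 1 else 0)
      (by intro y1 y2; split <;> norm_num)
      (by intro y2; cases y2 <;> simp [Fintype.sum_bool])
      y
    cases b <;> cases y <;>
      simpa [Fintype.sum_bool] using this.symm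
end
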